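/- Let p be an odd natural number and X₂ = (2A−1)·2^{k} with A, k natural numbers, 1 ≤ k ≤ w−3. Then T_{p+2^{w−k}}(X₂) ≡ T_p(X₂) (mod 2^w), and T_{p+2^{w−k−1}}(X₂) ≢ T_p(X₂) (mod 2^w). -/

import Mathlib

open Polynomial Polynomial.Chebyshev

private lemma Tcongr {m n : ℤ} (h : m = n) : T ℤ m = T ℤ n := by rw [h]
private lemma Ucongr {m n : ℤ} (h : m = n) : U ℤ m = U ℤ n := by rw [h]

private lemma T_add_nat (a : ℤ) (b : ℕ) :
    T ℤ (a + b) = T ℤ a * T ℤ b + (X ^ 2 - 1) * U ℤ (a - 1) * U ℤ ((b : ℤ) - 1) := by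
  induction b using Nat.twoStepInduction with
  | zero => simp [U_neg_one]
  | one =>
      have h := T_eq_X_mul_T_sub_pol_U ℤ (a - 1)
      have e1 : a - 1 + 2 = a + ((1 : ℕ) : ℤ) := by push_cast [Nat.cast_ofNat]; try ring
      have e2 : a - 1 + 1 = a := by ring
      have e3 : ((1 : ℕ) : ℤ) - 1 = 0 := by push_cast [Nat.cast_ofNat]; try ring
      have e4 : ((1 : ℕ) : ℤ) = 1 := by push_cast [Nat.cast_ofNat]; try ring
      rw [Tcongr e1, Tcongr e2] at h
      rw [Ucongr e3, Tcongr e4, U_zero, T_one]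
      linear_combination h
  | more n ih1 ih2 =>
      have hT := T_add_two ℤ (a + n)
      have hTb := T_add_two ℤ (n : ℤ)
      have hUb := U_add_two ℤ ((n : ℤ) - 1)
      have e1 : a + (n : ℤ) + 2 = a + ((n + 2 : ℕ) : ℤ) := by push_cast [Nat.cast_ofNat]; try ring
      have e2 : a + (n : ℤ) + 1 = a + ((n + 1 : ℕ) : ℤ) := by push_cast [Nat.cast_ofNat]; try ring
      have e3 : (n : ℤ) + 2 = ((n + 2 : ℕ) : ℤ) := by push_cast [Nat.cast_ofNat]; try ring
      have e4 : (n : ℤ) + 1 = ((n + 1 : ℕ) : ℤ) := by push_cast [Nat.cast_ofNat]; try ring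
      have e5 : (n : ℤ) - 1 + 2 = ((n + 2 : ℕ) : ℤ) - 1 := by push_cast [Nat.cast_ofNat]; try ring
      have e6 : (n : ℤ) - 1 + 1 = ((n + 1 : ℕ) : ℤ) - 1 := by push_cast [Nat.cast_ofNat]; try ring
      rw [Tcongr e1, Tcongr e2] at hT
      rw [Tcongr e3, Tcongr e4] at hTb
      rw [Ucongr e5, Ucongr e6] at hUb
      linear_combination hT + 2 * X * ih2 - ih1 - T ℤ a * hTb
        - (X ^ 2 - 1) * U ℤ (a - 1) * hUb

private lemma U_add_nat (a : ℤ) (b : ℕ) :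
    U ℤ (a + b) = U ℤ a * T ℤ b + T ℤ (a + 1) * U ℤ ((b : ℤ) - 1) := by
  induction b using Nat.twoStepInduction with
  | zero => simp [U_neg_one]
  | one =>
      have h := U_eq_X_mul_U_add_T ℤ a
      have e1 : a + 1 = a + ((1 : ℕ) : ℤ) := by push_cast [Nat.cast_ofNat]; try ring
      have e3 : ((1 : ℕ) : ℤ) - 1 = 0 := by push_cast [Nat.cast_ofNat]; try ring
      have e4 : ((1 : ℕ) : ℤ) = 1 := by push_cast [Nat.cast_ofNat]; try ring
      rw [Ucongr e1] at h
      rw [Ucongr e3, Tcongr e4, U_zero, T_one]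
      linear_combination h
  | more n ih1 ih2 =>
      have hU := U_add_two ℤ (a + n)
      have hTb := T_add_two ℤ (n : ℤ)
      have hUb := U_add_two ℤ ((n : ℤ) - 1)
      have e1 : a + (n : ℤ) + 2 = a + ((n + 2 : ℕ) : ℤ) := by push_cast; try ring
      have e2 : a + (n : ℤ) + 1 = a + ((n + 1 : ℕ) : ℤ) := by push_cast; try ring
      have e3 : (n : ℤ) + 2 = ((n + 2 : ℕ) : ℤ) := by push_cast; try ring
      have e4 : (n : ℤ) + 1 = ((n + 1 : ℕ) : ℤ) := by push_cast; try ring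
      have e5 : (n : ℤ) - 1 + 2 = ((n + 2 : ℕ) : ℤ) - 1 := by push_cast; try ring
      have e6 : (n : ℤ) - 1 + 1 = ((n + 1 : ℕ) : ℤ) - 1 := by push_cast; try ring
      rw [Ucongr e1, Ucongr e2] at hU
      rw [Tcongr e3, Tcongr e4] at hTb
      rw [Ucongr e5, Ucongr e6] at hUb
      linear_combination hU + 2 * X * ih2 - ih1 - U ℤ a * hTb
        - T ℤ (a + 1) * hUb

/-- `T (a+2b) - T a = 2 (X²-1) U (a+b-1) U (b-1)` -/
private lemma T_diff (a : ℤ) (b : ℕ) :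
    T ℤ (a + 2 * b) - T ℤ a
      = 2 * (X ^ 2 - 1) * U ℤ (a + b - 1) * U ℤ ((b : ℤ) - 1) := by
  have h1 := T_add_nat (a + b) b
  have h2 := T_mul_T ℤ (a + b) b
  have e1 : a + (b : ℤ) + b = a + 2 * b := by ring
  have e2 : a + (b : ℤ) - b = a := by ring
  rw [Tcongr e1] at h1
  rw [Tcongr e1, Tcongr e2] at h2
  linear_combination 2 * h1 + h2

private lemma T_double_odd (x : ℤ) (n : ℤ) : Odd ((T ℤ (2 * n)).eval x) := by
  have h := T_mul_T ℤ n n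
  have e1 : n + n = 2 * n := by ring
  have e2 : n - n = 0 := by ring
  rw [Tcongr e1, Tcongr e2, T_zero] at h
  have h2 := congrArg (Polynomial.eval x) h
  simp only [Polynomial.eval_add, Polynomial.eval_mul, Polynomial.eval_one,
    Polynomial.eval_ofNat] at h2
  exact ⟨(T ℤ n).eval x * (T ℤ n).eval x - 1, by linarith⟩

private lemma U_even_odd (x : ℤ) (hx : 2 ∣ x) :
    ∀ n : ℕ, Even n → Odd ((U ℤ (n : ℤ)).eval x) := by
  intro n
  induction n using Nat.twoStepInduction with
  | zero => intro _; simpa [U_zero] using (⟨0, by ring⟩ : Odd (1 : ℤ))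
  | one => intro h; exact absurd h (by simp)
  | more n ih1 _ =>
      intro h
      have hn : Even n := by
        rcases h with ⟨t, ht⟩; exact ⟨t - 1, by omega⟩
      obtain ⟨d, hd⟩ := ih1 hn
      obtain ⟨c, hc⟩ := hx
      have hU := U_add_two ℤ (n : ℤ)
      have e1 : (n : ℤ) + 2 = ((n + 2 : ℕ) : ℤ) := by push_cast; try ring
      have e2 : (n : ℤ) + 1 = ((n + 1 : ℕ) : ℤ) := by push_cast; try ring
      rw [Ucongr e1, Ucongr e2] at hU
      have h2 := congrArg (Polynomial.eval x) hU
      simp only [Polynomial.eval_sub, Polynomial.eval_mul, Polynomial.eval_X,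
        Polynomial.eval_ofNat] at h2
      exact ⟨2 * c * ((U ℤ ((n + 1 : ℕ) : ℤ)).eval x) - d - 1, by
        rw [h2, hd, hc]; ring⟩

private lemma U_pow_val (o : ℤ) (ho : Odd o) (k : ℕ) :
    ∀ j : ℕ, 1 ≤ j → ∃ c : ℤ, Odd c ∧
      (U ℤ ((2 : ℤ) ^ j - 1)).eval (o * 2 ^ k) = 2 ^ (j + k) * c := by
  intro j hj
  induction j, hj using Nat.le_induction with
  | base =>
      refine ⟨o, ho, ?_⟩
      have e : (2 : ℤ) ^ 1 - 1 = 1 := by norm_num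
      rw [Ucongr e, U_one]
      simp only [Polynomial.eval_mul, Polynomial.eval_X, Polynomial.eval_ofNat]
      ring
  | succ j hj ih =>
      obtain ⟨c, hc, hval⟩ := ih
      have h := U_add_nat ((2 : ℤ) ^ j - 1) (2 ^ j)
      have e1 : (2 : ℤ) ^ j - 1 + ((2 ^ j : ℕ) : ℤ) = 2 ^ (j + 1) - 1 := by
        push_cast; ring
      have e2 : (2 : ℤ) ^ j - 1 + 1 = 2 ^ j := by ring
      have e3 : ((2 ^ j : ℕ) : ℤ) = 2 ^ j := by push_cast; try ring
      rw [Ucongr e1, Tcongr e3, Tcongr e2] at h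
      have e4 : ((2 ^ j : ℕ) : ℤ) - 1 = (2 : ℤ) ^ j - 1 := by push_cast; try ring
      rw [Ucongr e4] at h
      have h2 := congrArg (Polynomial.eval (o * 2 ^ k)) h
      simp only [Polynomial.eval_add, Polynomial.eval_mul] at h2
      have e5 : (2 : ℤ) ^ j = 2 * 2 ^ (j - 1) := by
        rw [← pow_succ']
        congr 1
        omega
      have ht : Odd ((T ℤ ((2 : ℤ) ^ j)).eval (o * 2 ^ k)) := by
        rw [Tcongr e5]; exact T_double_odd _ _
      refine ⟨(T ℤ ((2 : ℤ) ^ j)).eval (o * 2 ^ k) * c, ht.mul hc, ?_⟩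
      rw [h2, hval]
      ring





/-- Let `p` be odd and `X₂ = (2A−1)·2^k` with `A ≥ 1`, `1 ≤ k ≤ w−3`. Then
`T_{p+2^{w−k}}(X₂) ≡ T_p(X₂) (mod 2^w)` but
`T_{p+2^{w−k−1}}(X₂) ≢ T_p(X₂) (mod 2^w)`. -/
theorem chebyshev_degree_period_X2 (w A k p : ℕ) (hA : 1 ≤ A) (hk : 1 ≤ k)
    (hw : 3 ≤ w) (hkw : k ≤ w - 3) (hp : Odd p) :
    ((Polynomial.Chebyshev.T ℤ ((p : ℤ) + 2 ^ (w - k))).eval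
        ((2 * (A : ℤ) - 1) * 2 ^ k) ≡
      (Polynomial.Chebyshev.T ℤ (p : ℤ)).eval ((2 * (A : ℤ) - 1) * 2 ^ k)
        [ZMOD 2 ^ w]) ∧
    ¬ ((Polynomial.Chebyshev.T ℤ ((p : ℤ) + 2 ^ (w - k - 1))).eval
        ((2 * (A : ℤ) - 1) * 2 ^ k) ≡
      (Polynomial.Chebyshev.T ℤ (p : ℤ)).eval ((2 * (A : ℤ) - 1) * 2 ^ k)
        [ZMOD 2 ^ w]) := by
  set x : ℤ := (2 * (A : ℤ) - 1) * 2 ^ k with hxdef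
  have ho : Odd (2 * (A : ℤ) - 1) := ⟨(A : ℤ) - 1, by ring⟩
  have hkw' : k + 3 ≤ w := by omega
  constructor
  · -- first part
    set j1 : ℕ := w - k - 1 with hj1
    have hj1w : j1 + k = w - 1 := by omega
    have hj1one : 1 ≤ j1 := by omega
    have hD := T_diff (p : ℤ) (2 ^ j1)
    have e1 : (p : ℤ) + 2 * ((2 ^ j1 : ℕ) : ℤ) = (p : ℤ) + 2 ^ (w - k) := by
      have : w - k = j1 + 1 := by omega
      rw [this]; push_cast; ring
    have e2 : ((2 ^ j1 : ℕ) : ℤ) - 1 = (2 : ℤ) ^ j1 - 1 := by push_cast; try ring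
    rw [Tcongr e1, Ucongr e2] at hD
    have h2 := congrArg (Polynomial.eval x) hD
    simp only [Polynomial.eval_sub, Polynomial.eval_mul, Polynomial.eval_pow,
      Polynomial.eval_X, Polynomial.eval_one, Polynomial.eval_ofNat] at h2
    obtain ⟨c, hc, hval⟩ := U_pow_val _ ho k j1 hj1one
    rw [← hxdef] at hval
    rw [hval] at h2
    have hdvd : (2 : ℤ) ^ w ∣
        (T ℤ ((p : ℤ) + 2 ^ (w - k))).eval x - (T ℤ (p : ℤ)).eval x := by
      rw [h2]
      refine ⟨(x ^ 2 - 1) * (U ℤ ((p : ℤ) + ((2 ^ j1 : ℕ) : ℤ) - 1)).eval x * c, ?_⟩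
      have hww : w = (j1 + k) + 1 := by omega
      rw [hww]
      ring
    exact ((Int.modEq_iff_dvd).mpr hdvd).symm
  · -- second part
    set j2 : ℕ := w - k - 2 with hj2
    have hj2w : j2 + k = w - 2 := by omega
    have hj2one : 1 ≤ j2 := by omega
    have hD := T_diff (p : ℤ) (2 ^ j2)
    have e1 : (p : ℤ) + 2 * ((2 ^ j2 : ℕ) : ℤ) = (p : ℤ) + 2 ^ (w - k - 1) := by
      have : w - k - 1 = j2 + 1 := by omega
      rw [this]; push_cast; ring
    have e2 : ((2 ^ j2 : ℕ) : ℤ) - 1 = (2 : ℤ) ^ j2 - 1 := by push_cast; try ring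
    have hp1 : 1 ≤ p := hp.pos
    have e3 : (p : ℤ) + ((2 ^ j2 : ℕ) : ℤ) - 1 = ((p + 2 ^ j2 - 1 : ℕ) : ℤ) := by
      rw [Nat.cast_sub (hp1.trans (Nat.le_add_right _ _) : 1 ≤ p + 2 ^ j2)]
      push_cast
      ring
    rw [Tcongr e1, Ucongr e2, Ucongr e3] at hD
    have h2 := congrArg (Polynomial.eval x) hD
    simp only [Polynomial.eval_sub, Polynomial.eval_mul, Polynomial.eval_pow,
      Polynomial.eval_X, Polynomial.eval_one, Polynomial.eval_ofNat] at h2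
    obtain ⟨c, hc, hval⟩ := U_pow_val _ ho k j2 hj2one
    rw [← hxdef] at hval
    rw [hval] at h2
    -- U at even index is odd
    have hxeven : 2 ∣ x :=
      ((dvd_pow_self (2 : ℤ) (by omega : k ≠ 0))).mul_left _
    have heven : Even (p + 2 ^ j2 - 1) := by
      obtain ⟨t, ht⟩ := hp
      have h2j : 2 ∣ 2 ^ j2 := dvd_pow_self 2 (by omega)
      obtain ⟨s, hs⟩ := h2j
      exact ⟨t + s, by omega⟩
    obtain ⟨d, hd⟩ := U_even_odd x hxeven _ heven
    rw [hd] at h2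
    -- total difference is 2^(w-1) * odd
    intro hmod
    have hdvd : (2 : ℤ) ^ w ∣
        (T ℤ ((p : ℤ) + 2 ^ (w - k - 1))).eval x - (T ℤ (p : ℤ)).eval x :=
      Int.ModEq.dvd hmod.symm
    rw [h2] at hdvd
    have hodd : Odd ((x ^ 2 - 1) * (2 * d + 1) * c) := by
      have hx2 : Odd (x ^ 2 - 1) := by
        obtain ⟨e, he⟩ := hxeven
        exact ⟨2 * e ^ 2 - 1, by rw [he]; ring⟩
      exact (hx2.mul ⟨d, by ring⟩).mul hc
    obtain ⟨m, hm⟩ := hodd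
    have hww : w = (w - 1) + 1 := by omega
    rw [hww] at hdvd
    obtain ⟨q, hq⟩ := hdvd
    rw [show w - 1 + 1 = w - 2 + 1 + 1 by omega, pow_succ, pow_succ, hj2w] at hq
    have h3 : (2 : ℤ) ^ (w - 2) * 2 * (2 * m + 1) = 2 ^ (w - 2) * 2 * (2 * q) := by
      linear_combination hq - 2 * (2 : ℤ) ^ (w - 2) * hm
    have h4 := mul_left_cancel₀
      (by positivity : ((2 : ℤ) ^ (w - 2) * 2) ≠ 0) h3
    omega
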